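/- Let R be a rigid topological ring and M a free R-module. Then the canonical map Λ_M : M → ((M*, weak-*))', v ↦ (ℓ ↦ ℓ(v)), is an isomorphism of R-modules. -/

import Mathlib

universe u

/-- The weak-* topology on the algebraic dual of a module. -/
instance weakStar (R M : Type*) [CommRing R] [TopologicalSpace R]
    [AddCommGroup M] [Module R M] : TopologicalSpace (M →ₗ[R] R) :=
  TopologicalSpace.induced (fun ℓ => (⇑ℓ : M → R)) Pi.topologicalSpace

/-- A topological ring is rigid when for every set `X`, the map
`λ_X : (X →₀ R) → (R^X)'` is surjective onto the continuous dual of `R^X`. -/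
def IsRigid (R : Type u) [CommRing R] [TopologicalSpace R] : Prop :=
  ∀ (X : Type u) (ℓ : (X → R) →L[R] R),
    ∃ p : X →₀ R, ∀ f, ℓ f = p.sum fun x c => c * f x

/-- For a rigid ring `R` and a free module `M`, the canonical map
`Λ_M : M → ((M*, weak-*))'`, `v ↦ (ℓ ↦ ℓ v)`, is an isomorphism of `R`-modules. -/
theorem stmt16 {R : Type u} [CommRing R] [TopologicalSpace R] [IsTopologicalRing R] [T2Space R]
    (h : IsRigid R) (M : Type u) [AddCommGroup M] [Module R M] [Module.Free R M] :
    ∃ e : M ≃ₗ[R] ((M →ₗ[R] R) →L[R] R),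
      ∀ (v : M) (ℓ : M →ₗ[R] R), e v ℓ = ℓ v := by
  classical
  set ι := Module.Free.ChooseBasisIndex R M with hι
  let b : Module.Basis ι R M := Module.Free.chooseBasis R M
  have cont_eval : ∀ v : M, Continuous fun ℓ : M →ₗ[R] R => ℓ v := fun v =>
    (continuous_apply v).comp continuous_induced_dom
  let Λ : M →ₗ[R] ((M →ₗ[R] R) →L[R] R) :=
    { toFun := fun v =>
        { toFun := fun ℓ => ℓ v
          map_add' := fun ℓ₁ ℓ₂ => rfl
          map_smul' := fun c ℓ => rfl
          cont := cont_eval v }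
      map_add' := fun v w => by ext ℓ; exact ℓ.map_add v w
      map_smul' := fun c v => by ext ℓ; exact ℓ.map_smul c v }
  have hinj : Function.Injective Λ := by
    intro v w hvw
    have hvw' : ∀ ℓ : M →ₗ[R] R, ℓ v = ℓ w := fun ℓ => congrArg (fun T : (M →ₗ[R] R) →L[R] R => T ℓ) hvw
    have : b.repr v = b.repr w := by
      ext x
      simpa [Module.Basis.coord] using hvw' (b.coord x)
    exact b.repr.injective this
  have hΦcont : Continuous fun f : ι → R => (b.constr (M' := R) R f : M →ₗ[R] R) := by
    apply continuous_induced_rng.2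
    apply continuous_pi
    intro v
    show Continuous fun f : ι → R => (b.constr (M' := R) R f : M →ₗ[R] R) v
    have : (fun f : ι → R => (b.constr (M' := R) R f : M →ₗ[R] R) v)
        = fun f : ι → R => ∑ x ∈ (b.repr v).support, (b.repr v) x * f x := by
      funext f
      rw [Module.Basis.constr_apply]
      simp [Finsupp.sum, smul_eq_mul]
    rw [this]
    exact continuous_finset_sum _ fun x _ => continuous_const.mul (continuous_apply x)
  have hsurj : Function.Surjective Λ := by
    intro T
    let ℓT : (ι → R) →L[R] R :=
      { toLinearMap := T.toLinearMap.comp (b.constr (M' := R) R).toLinearMap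
        cont := T.continuous.comp hΦcont }
    obtain ⟨p, hp⟩ := h ι ℓT
    refine ⟨b.repr.symm p, ?_⟩
    ext ℓ
    have hℓ : ℓ = b.constr (M' := R) R fun x => ℓ (b x) := by
      apply b.ext
      intro x
      simp [Module.Basis.constr_basis]
    have h1 : T ℓ = ℓT fun x => ℓ (b x) := by
      conv_lhs => rw [hℓ]
      rfl
    have h2 : ℓ (b.repr.symm p) = p.sum fun x c => c * ℓ (b x) := by
      rw [Module.Basis.repr_symm_apply, Finsupp.linearCombination_apply, map_finsuppSum]
      simp [smul_eq_mul]
    show ℓ (b.repr.symm p) = T ℓ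
    rw [h1, hp, h2]
  refine ⟨LinearEquiv.ofBijective Λ ⟨hinj, hsurj⟩, fun v ℓ => rfl⟩
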